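/- Let X be a Grassmannian frame of m vectors for R^n at angle α > 0 (i.e., X minimizes coherence among all m-element sets of unit vectors, with coherence α). Then the set of non-isolable vectors of X contains at least n+1 vectors. -/

import Mathlib

set_option maxHeartbeats 1000000

open scoped RealInnerProductSpace
abbrev E (n : ℕ) := EuclideanSpace ℝ (Fin n)
noncomputable def coh {n : ℕ} (X : Set (E n)) : ℝ :=
  sSup {r : ℝ | ∃ x ∈ X, ∃ y ∈ X, x ≠ y ∧ r = |⟪x, y⟫|}
def IsUnitSet {n : ℕ} (X : Set (E n)) : Prop := ∀ x ∈ X, ‖x‖ = 1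
def Isolated {n : ℕ} (X : Set (E n)) (x : E n) : Prop :=
  ∀ y ∈ X, y ≠ x → |⟪x, y⟫| < coh X
def Isolable {n : ℕ} (X : Set (E n)) (x : E n) : Prop :=
  ∀ ε > 0, ∃ x' : E n, ‖x'‖ = 1 ∧ ‖x - x'‖ < ε ∧ ∀ y ∈ X, y ≠ x → |⟪x', y⟫| < coh X
def Grassmannian {n : ℕ} (m : ℕ) (X : Set (E n)) : Prop :=
  IsUnitSet X ∧ X.Finite ∧ X.ncard = m ∧
    ∀ Y : Set (E n), IsUnitSet Y → Y.Finite → Y.ncard = m → coh X ≤ coh Y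

lemma cohSet_finite {n : ℕ} {X : Set (E n)} (hX : X.Finite) :
    {r : ℝ | ∃ x ∈ X, ∃ y ∈ X, x ≠ y ∧ r = |⟪x, y⟫|}.Finite := by
  apply Set.Finite.subset ((hX.prod hX).image (fun p => |⟪p.1, p.2⟫|))
  rintro r ⟨x, hx, y, hy, hne, rfl⟩
  exact ⟨(x, y), ⟨hx, hy⟩, rfl⟩

lemma abs_inner_le_coh {n : ℕ} {X : Set (E n)} (hX : X.Finite) {x y : E n}
    (hx : x ∈ X) (hy : y ∈ X) (hne : x ≠ y) : |⟪x, y⟫| ≤ coh X :=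
  le_csSup (cohSet_finite hX).bddAbove ⟨x, hx, y, hy, hne, rfl⟩

lemma coh_lt {n : ℕ} {X : Set (E n)} (hX : X.Finite) {α : ℝ} (hα : 0 < α)
    (h : ∀ x ∈ X, ∀ y ∈ X, x ≠ y → |⟪x, y⟫| < α) : coh X < α := by
  rcases Set.eq_empty_or_nonempty {r : ℝ | ∃ x ∈ X, ∃ y ∈ X, x ≠ y ∧ r = |⟪x, y⟫|} with he | hne
  · rw [coh, he, Real.sSup_empty]; exact hα
  · have hmem := hne.csSup_mem (cohSet_finite hX)
    obtain ⟨x, hx, y, hy, hxy, hr⟩ := hmem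
    rw [coh, hr]
    exact h x hx y hy hxy

lemma sqrt_sub_sqrt_le {x y : ℝ} (hx : 0 ≤ x) (hy : 0 ≤ y) :
    |Real.sqrt x - Real.sqrt y| ≤ Real.sqrt |x - y| := by
  rcases le_total x y with hxy | hxy
  · have h1 : |Real.sqrt x - Real.sqrt y| = Real.sqrt y - Real.sqrt x := by
      rw [abs_sub_comm]; exact abs_of_nonneg (by rw [sub_nonneg]; exact Real.sqrt_le_sqrt hxy)
    have h2 : |x - y| = y - x := by
      rw [abs_sub_comm]; exact abs_of_nonneg (by linarith)
    rw [h1, h2]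
    nlinarith [Real.sq_sqrt hx, Real.sq_sqrt hy, Real.sq_sqrt (show (0:ℝ) ≤ y - x by linarith),
      Real.sqrt_nonneg x, Real.sqrt_nonneg (y - x), Real.sqrt_nonneg y]
  · have h1 : |Real.sqrt x - Real.sqrt y| = Real.sqrt x - Real.sqrt y :=
      abs_of_nonneg (by rw [sub_nonneg]; exact Real.sqrt_le_sqrt hxy)
    have h2 : |x - y| = x - y := abs_of_nonneg (by linarith)
    rw [h1, h2]
    nlinarith [Real.sq_sqrt hx, Real.sq_sqrt hy, Real.sq_sqrt (show (0:ℝ) ≤ x - y by linarith),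
      Real.sqrt_nonneg y, Real.sqrt_nonneg (x - y), Real.sqrt_nonneg x]

lemma lemB {n k : ℕ} (hk : k ≤ n) (s : Fin k → E n) (hs : ∀ i, ‖s i‖ = 1)
    {δ : ℝ} (hδ : 0 < δ) :
    ∃ (u : Fin k → E n) (t : ℝ), 0 < t ∧ t < 1 ∧ (∀ i, ‖u i‖ = 1) ∧
      (∀ i, ‖u i - s i‖ < δ) ∧ ∀ i j, i ≠ j → ⟪u i, u j⟫ = (1 - t) * ⟪s i, s j⟫ := by
  classical
  set L : EuclideanSpace ℝ (Fin k) →ₗ[ℝ] E n :=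
    { toFun := fun c => ∑ i, c i • s i
      map_add' := by
        intro x y
        simp [add_smul, Finset.sum_add_distrib]
      map_smul' := by
        intro r x
        simp [smul_smul, Finset.smul_sum] } with hLdef
  have hLe : ∀ i, L (EuclideanSpace.single i 1) = s i := by
    intro i
    show (∑ j, (EuclideanSpace.single i (1:ℝ)) j • s j) = s i
    simp [EuclideanSpace.single_apply]
  have hTLL : ∀ x y, ⟪x, ((LinearMap.adjoint L) ∘ₗ L) y⟫ = ⟪L x, L y⟫ := by
    intro x y
    simp [LinearMap.adjoint_inner_right]
  set T := (LinearMap.adjoint L) ∘ₗ L with hTdef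
  have hT : T.IsSymmetric := by
    intro x y
    rw [real_inner_comm, hTLL, hTLL, real_inner_comm]
  have hdim : Module.finrank ℝ (EuclideanSpace ℝ (Fin k)) = k := finrank_euclideanSpace_fin
  set q := hT.eigenvectorBasis hdim with hqdef
  set μ := hT.eigenvalues hdim with hμdef
  have hq : ∀ ℓ, T (q ℓ) = μ ℓ • q ℓ := by
    intro ℓ
    have h := hT.apply_eigenvectorBasis hdim ℓ
    exact_mod_cast h
  set a : Fin k → E n := fun ℓ => L (q ℓ) with hadef
  have hqo : ∀ ℓ m, ⟪q ℓ, q m⟫ = if ℓ = m then 1 else 0 := orthonormal_iff_ite.mp q.orthonormal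
  have ha : ∀ ℓ m, ⟪a ℓ, a m⟫ = if ℓ = m then μ ℓ else 0 := by
    intro ℓ m
    have h2 : ⟪a ℓ, a m⟫ = ⟪q ℓ, T (q m)⟫ := (hTLL (q ℓ) (q m)).symm
    rw [h2, hq, real_inner_smul_right, hqo]
    by_cases h : ℓ = m <;> simp [h]
  have hμ0 : ∀ ℓ, 0 ≤ μ ℓ := by
    intro ℓ
    have h1 : ⟪a ℓ, a ℓ⟫ = μ ℓ := by rw [ha]; simp
    rw [← h1]
    exact real_inner_self_nonneg
  have hna : ∀ ℓ, ‖a ℓ‖ = Real.sqrt (μ ℓ) := by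
    intro ℓ
    have h1 : ⟪a ℓ, a ℓ⟫ = μ ℓ := by rw [ha]; simp
    rw [real_inner_self_eq_norm_sq] at h1
    rw [← h1, Real.sqrt_sq (norm_nonneg _)]
  have haz : ∀ ℓ, μ ℓ = 0 → a ℓ = 0 := by
    intro ℓ h
    have h2 := hna ℓ
    rw [h, Real.sqrt_zero, norm_eq_zero] at h2
    exact h2
  have hLsum : ∀ c, L c = ∑ ℓ, ⟪q ℓ, c⟫ • a ℓ := by
    intro c
    conv_lhs => rw [← q.sum_repr' c]
    rw [map_sum]
    simp only [map_smul]
    rfl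
  set W := LinearMap.range L with hWdef
  have haW : ∀ ℓ, a ℓ ∈ W := fun ℓ => ⟨q ℓ, rfl⟩
  set F : Finset (E n) := Finset.univ.image (fun z : {ℓ : Fin k // μ ℓ ≠ 0} => a z.1) with hFdef
  have hWle : W ≤ Submodule.span ℝ (F : Set (E n)) := by
    rintro w ⟨c, rfl⟩
    rw [hLsum]
    apply Submodule.sum_mem
    intro ℓ _
    by_cases h : μ ℓ = 0
    · rw [haz ℓ h, smul_zero]; exact Submodule.zero_mem _
    · refine Submodule.smul_mem _ _ (Submodule.subset_span ?_)
      simp only [hFdef, Finset.coe_image, Set.mem_image]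
      exact ⟨⟨ℓ, h⟩, by simp, rfl⟩
  have hcard : Fintype.card {ℓ : Fin k // μ ℓ = 0} ≤ Module.finrank ℝ (Wᗮ : Submodule ℝ (E n)) := by
    have e1 : Module.finrank ℝ W + Module.finrank ℝ (Wᗮ : Submodule ℝ (E n)) = n := by
      rw [Submodule.finrank_add_finrank_orthogonal]
      exact finrank_euclideanSpace_fin
    have e2 : Module.finrank ℝ W ≤ F.card :=
      le_trans (Submodule.finrank_mono hWle) (finrank_span_finset_le_card F)
    have e3 : F.card ≤ Fintype.card {ℓ : Fin k // μ ℓ ≠ 0} :=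
      le_trans Finset.card_image_le (by simp)
    have e4 : Fintype.card {ℓ : Fin k // μ ℓ ≠ 0} = k - Fintype.card {ℓ : Fin k // μ ℓ = 0} := by
      have := Fintype.card_subtype_compl (fun ℓ : Fin k => μ ℓ = 0)
      simpa using this
    have e5 : Fintype.card {ℓ : Fin k // μ ℓ = 0} ≤ k := by
      have := Fintype.card_subtype_le (fun ℓ : Fin k => μ ℓ = 0)
      simpa using this
    omega
  obtain ⟨emb⟩ : Nonempty ({ℓ : Fin k // μ ℓ = 0} ↪ Fin (Module.finrank ℝ (Wᗮ : Submodule ℝ (E n)))) :=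
    Function.Embedding.nonempty_of_card_le (by simpa using hcard)
  set bW := stdOrthonormalBasis ℝ (↥(Wᗮ)) with hbWdef
  set f : {ℓ : Fin k // μ ℓ = 0} → E n := fun z => (bW (emb z) : E n) with hfdef
  have hfW : ∀ z, (f z) ∈ Wᗮ := fun z => (bW (emb z)).2
  have hff : ∀ z w, ⟪f z, f w⟫ = if z = w then 1 else 0 := by
    intro z w
    have h1 := orthonormal_iff_ite.mp bW.orthonormal (emb z) (emb w)
    rw [Submodule.coe_inner] at h1
    rw [hfdef]
    simp only []
    rw [h1]
    by_cases h : z = w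
    · simp [h]
    · rw [if_neg h, if_neg (fun he => h (emb.injective he))]
  have hfa : ∀ z ℓ, ⟪f z, a ℓ⟫ = 0 := fun z ℓ =>
    Submodule.inner_left_of_mem_orthogonal (haW ℓ) (hfW z)
  set M := ∑ ℓ, μ ℓ with hMdef
  have hM0 : 0 ≤ M := Finset.sum_nonneg fun ℓ _ => hμ0 ℓ
  have hμM : ∀ ℓ, μ ℓ ≤ M := fun ℓ => Finset.single_le_sum (fun i _ => hμ0 i) (Finset.mem_univ ℓ)
  set t := min (1/2 : ℝ) (δ^2 / (((k:ℝ)+1)^2 * (1+M))) with htdef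
  have ht0 : 0 < t := lt_min (by norm_num) (by positivity)
  have ht1 : t < 1 := lt_of_le_of_lt (min_le_left _ _) (by norm_num)
  have htle : ∀ ℓ, t * (1 + μ ℓ) ≤ (δ / ((k:ℝ)+1))^2 := by
    intro ℓ
    have h1 : t ≤ δ^2 / (((k:ℝ)+1)^2 * (1+M)) := min_le_right _ _
    have h2 : (1 : ℝ) + μ ℓ ≤ 1 + M := by linarith [hμM ℓ]
    have h3 : (0:ℝ) < 1 + M := by linarith
    have h4 : (0:ℝ) < ((k:ℝ)+1)^2 := by positivity
    have h5 : t * (1 + μ ℓ) ≤ (δ^2 / (((k:ℝ)+1)^2 * (1+M))) * (1 + M) := by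
      apply mul_le_mul h1 h2 (by linarith [hμ0 ℓ]) (by positivity)
    calc t * (1 + μ ℓ) ≤ (δ^2 / (((k:ℝ)+1)^2 * (1+M))) * (1 + M) := h5
      _ = δ^2 / ((k:ℝ)+1)^2 := by field_simp
      _ = (δ / ((k:ℝ)+1))^2 := by rw [div_pow]
  have harg : ∀ ℓ, 0 ≤ (1-t) * μ ℓ + t :=
    fun ℓ => add_nonneg (mul_nonneg (by linarith) (hμ0 ℓ)) ht0.le
  set v : Fin k → E n := fun ℓ => if h : μ ℓ = 0 then Real.sqrt t • f ⟨ℓ, h⟩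
    else (Real.sqrt ((1-t) * μ ℓ + t) / Real.sqrt (μ ℓ)) • a ℓ with hvdef
  have hvv : ∀ ℓ m, ⟪v ℓ, v m⟫ = if ℓ = m then (1-t) * μ ℓ + t else 0 := by
    intro ℓ m
    by_cases hℓ : μ ℓ = 0 <;> by_cases hm : μ m = 0
    · simp only [hvdef, dif_pos hℓ, dif_pos hm, real_inner_smul_left, real_inner_smul_right, hff]
      by_cases h : ℓ = m
      · subst h
        simp [Real.mul_self_sqrt ht0.le, hℓ]
      · have hne : (⟨ℓ,hℓ⟩ : {ℓ : Fin k // μ ℓ = 0}) ≠ ⟨m,hm⟩ := by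
          simpa [Subtype.ext_iff] using h
        simp [if_neg hne, if_neg h]
    · have hne : ℓ ≠ m := fun h => hm (h ▸ hℓ)
      simp only [hvdef, dif_pos hℓ, dif_neg hm, real_inner_smul_left, real_inner_smul_right]
      rw [hfa]
      simp [if_neg hne]
    · have hne : ℓ ≠ m := fun h => hℓ (h ▸ hm)
      simp only [hvdef, dif_neg hℓ, dif_pos hm, real_inner_smul_left, real_inner_smul_right]
      rw [real_inner_comm, hfa]
      simp [if_neg hne]
    · simp only [hvdef, dif_neg hℓ, dif_neg hm, real_inner_smul_left, real_inner_smul_right, ha]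
      by_cases h : ℓ = m
      · subst h
        rw [if_pos rfl, if_pos rfl]
        have hq1 : Real.sqrt (μ ℓ) ≠ 0 := by
          simpa [Real.sqrt_eq_zero (hμ0 ℓ)] using hℓ
        field_simp
        linear_combination (μ ℓ) * Real.mul_self_sqrt (harg ℓ) -
          ((1-t)*μ ℓ + t) * Real.mul_self_sqrt (hμ0 ℓ)
      · simp [if_neg h]
  set c : Fin k → Fin k → ℝ := fun i ℓ => ⟪q ℓ, (EuclideanSpace.single i (1:ℝ))⟫ with hcdef
  set u : Fin k → E n := fun i => ∑ ℓ, c i ℓ • v ℓ with hudef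
  have hsc : ∀ i, s i = ∑ ℓ, c i ℓ • a ℓ := by
    intro i
    conv_lhs => rw [← hLe i, hLsum]
  have hsingle : ∀ i j : Fin k,
      ⟪(EuclideanSpace.single i (1:ℝ)), (EuclideanSpace.single j (1:ℝ))⟫ = if i = j then 1 else 0 := by
    intro i j
    rw [EuclideanSpace.inner_single_left]
    by_cases h : i = j
    · simp [h, EuclideanSpace.single_apply]
    · simp [EuclideanSpace.single_apply, h, Ne.symm h]
  have hcc : ∀ i j, (∑ ℓ, c i ℓ * c j ℓ) = if i = j then 1 else 0 := by
    intro i j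
    have h1 := q.sum_inner_mul_inner (EuclideanSpace.single i (1:ℝ)) (EuclideanSpace.single j (1:ℝ))
    rw [← hsingle i j, ← h1]
    refine Finset.sum_congr rfl (fun ℓ _ => ?_)
    rw [hcdef]
    simp only []
    rw [real_inner_comm (q ℓ)]
  have hccμ : ∀ i j, (∑ ℓ, c i ℓ * c j ℓ * μ ℓ) = ⟪s i, s j⟫ := by
    intro i j
    have h1 := q.sum_inner_mul_inner (EuclideanSpace.single i (1:ℝ)) (T (EuclideanSpace.single j (1:ℝ)))
    have h2 : ∀ ℓ, ⟪q ℓ, T (EuclideanSpace.single j (1:ℝ))⟫ = μ ℓ * c j ℓ := by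
      intro ℓ
      rw [← hT (q ℓ), hq, real_inner_smul_left]
    calc (∑ ℓ, c i ℓ * c j ℓ * μ ℓ)
        = ∑ ℓ, ⟪(EuclideanSpace.single i (1:ℝ)), q ℓ⟫ * ⟪q ℓ, T (EuclideanSpace.single j (1:ℝ))⟫ := by
          refine Finset.sum_congr rfl (fun ℓ _ => ?_)
          rw [h2 ℓ, hcdef]
          simp only []
          rw [real_inner_comm (q ℓ)]
          ring
      _ = ⟪(EuclideanSpace.single i (1:ℝ)), T (EuclideanSpace.single j (1:ℝ))⟫ := h1
      _ = ⟪L (EuclideanSpace.single i (1:ℝ)), L (EuclideanSpace.single j (1:ℝ))⟫ := hTLL _ _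
      _ = ⟪s i, s j⟫ := by rw [hLe, hLe]
  have huu : ∀ i j, ⟪u i, u j⟫ = (1-t) * ⟪s i, s j⟫ + t * (if i = j then 1 else 0) := by
    intro i j
    have hterm : ∀ ℓ, ⟪c i ℓ • v ℓ, u j⟫ = c i ℓ * c j ℓ * ((1-t) * μ ℓ + t) := by
      intro ℓ
      rw [real_inner_smul_left]
      have h3 : ⟪v ℓ, u j⟫ = c j ℓ * ((1-t) * μ ℓ + t) := by
        rw [hudef]
        simp only []
        rw [inner_sum]
        have hm : ∀ m ∈ Finset.univ, ⟪v ℓ, c j m • v m⟫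
            = if ℓ = m then c j m * ((1-t)*μ ℓ + t) else 0 := by
          intro m _
          rw [real_inner_smul_right, hvv]
          by_cases h : ℓ = m
          · subst h; simp
          · simp [h]
        rw [Finset.sum_congr rfl hm, Finset.sum_ite_eq]
        simp
      rw [h3]; ring
    have e0 : ⟪u i, u j⟫ = ∑ ℓ, ⟪c i ℓ • v ℓ, u j⟫ := by
      conv_lhs => rw [hudef]
      simp only []
      rw [sum_inner]
    rw [e0, Finset.sum_congr rfl (fun ℓ _ => hterm ℓ)]
    have e : (∑ ℓ, c i ℓ * c j ℓ * ((1-t)*μ ℓ + t))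
        = (1-t) * (∑ ℓ, c i ℓ * c j ℓ * μ ℓ) + t * (∑ ℓ, c i ℓ * c j ℓ) := by
      rw [Finset.mul_sum, Finset.mul_sum, ← Finset.sum_add_distrib]
      exact Finset.sum_congr rfl (fun ℓ _ => by ring)
    rw [e, hccμ, hcc]
  have hu1 : ∀ i, ‖u i‖ = 1 := by
    intro i
    have h1 : ⟪u i, u i⟫ = 1 := by
      rw [huu i i, if_pos rfl]
      have h2 : ⟪s i, s i⟫ = 1 := by
        rw [real_inner_self_eq_norm_sq, hs i]; norm_num
      rw [h2]; ring
    have h2 : ‖u i‖^2 = 1 := by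
      rw [← h1, real_inner_self_eq_norm_sq]
    calc ‖u i‖ = Real.sqrt (‖u i‖^2) := (Real.sqrt_sq (norm_nonneg _)).symm
      _ = 1 := by rw [h2, Real.sqrt_one]
  have hva : ∀ ℓ, ‖v ℓ - a ℓ‖ ≤ δ / ((k:ℝ)+1) := by
    intro ℓ
    have hδk : 0 ≤ δ / ((k:ℝ)+1) := by positivity
    by_cases h : μ ℓ = 0
    · rw [hvdef]
      simp only [dif_pos h, haz ℓ h, sub_zero]
      rw [norm_smul]
      have hf1 : ‖f ⟨ℓ,h⟩‖ = 1 := by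
        have h4 := hff ⟨ℓ,h⟩ ⟨ℓ,h⟩
        rw [if_pos rfl, real_inner_self_eq_norm_sq] at h4
        nlinarith [norm_nonneg (f ⟨ℓ,h⟩)]
      rw [hf1, mul_one, Real.norm_eq_abs, abs_of_nonneg (Real.sqrt_nonneg _)]
      have h5 := htle ℓ
      rw [h, add_zero, mul_one] at h5
      calc Real.sqrt t ≤ Real.sqrt ((δ/((k:ℝ)+1))^2) := Real.sqrt_le_sqrt h5
        _ = δ/((k:ℝ)+1) := Real.sqrt_sq hδk
    · rw [hvdef]
      simp only [dif_neg h]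
      have hμpos : 0 < μ ℓ := lt_of_le_of_ne (hμ0 ℓ) (Ne.symm h)
      have hsqne : Real.sqrt (μ ℓ) ≠ 0 := by positivity
      have e1 : (Real.sqrt ((1-t)*μ ℓ + t) / Real.sqrt (μ ℓ)) • a ℓ - a ℓ
          = (Real.sqrt ((1-t)*μ ℓ + t) / Real.sqrt (μ ℓ) - 1) • a ℓ := by
        rw [sub_smul, one_smul]
      rw [e1, norm_smul, hna, Real.norm_eq_abs]
      have e2a : (Real.sqrt ((1-t)*μ ℓ + t) / Real.sqrt (μ ℓ) - 1) * Real.sqrt (μ ℓ)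
          = Real.sqrt ((1-t)*μ ℓ + t) - Real.sqrt (μ ℓ) := by field_simp
      have e2 : |Real.sqrt ((1-t)*μ ℓ + t) / Real.sqrt (μ ℓ) - 1| * Real.sqrt (μ ℓ)
          = |Real.sqrt ((1-t)*μ ℓ + t) - Real.sqrt (μ ℓ)| := by
        rw [← e2a, abs_mul, abs_of_nonneg (Real.sqrt_nonneg (μ ℓ))]
      rw [e2]
      calc |Real.sqrt ((1-t)*μ ℓ + t) - Real.sqrt (μ ℓ)|
          ≤ Real.sqrt |((1-t)*μ ℓ + t) - μ ℓ| := sqrt_sub_sqrt_le (harg ℓ) (hμ0 ℓ)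
        _ ≤ Real.sqrt (t*(1+μ ℓ)) := Real.sqrt_le_sqrt (by
            have e3 : (1-t)*μ ℓ + t - μ ℓ = t*(1 - μ ℓ) := by ring
            rw [e3, abs_mul, abs_of_nonneg ht0.le]
            have e4 : |1 - μ ℓ| ≤ 1 + μ ℓ := by
              rw [abs_le]; constructor <;> nlinarith [hμ0 ℓ]
            nlinarith [ht0.le])
        _ ≤ Real.sqrt ((δ/((k:ℝ)+1))^2) := Real.sqrt_le_sqrt (htle ℓ)
        _ = δ/((k:ℝ)+1) := Real.sqrt_sq hδk
  have husd : ∀ i, ‖u i - s i‖ < δ := by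
    intro i
    have hc1 : ∀ ℓ, |c i ℓ| ≤ 1 := by
      intro ℓ
      have h6 := abs_real_inner_le_norm (q ℓ) (EuclideanSpace.single i (1:ℝ))
      rw [q.orthonormal.1 ℓ, EuclideanSpace.norm_single] at h6
      rw [hcdef]
      simpa using h6
    have e1 : u i - s i = ∑ ℓ, c i ℓ • (v ℓ - a ℓ) := by
      rw [hudef]
      simp only []
      rw [hsc i, ← Finset.sum_sub_distrib]
      exact Finset.sum_congr rfl (fun ℓ _ => (smul_sub _ _ _).symm)
    rw [e1]
    have hk1 : (0:ℝ) < (k:ℝ)+1 := by positivity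
    calc ‖∑ ℓ, c i ℓ • (v ℓ - a ℓ)‖ ≤ ∑ ℓ, ‖c i ℓ • (v ℓ - a ℓ)‖ := norm_sum_le _ _
      _ ≤ ∑ _ℓ : Fin k, δ/((k:ℝ)+1) := Finset.sum_le_sum (fun ℓ _ => by
          rw [norm_smul, Real.norm_eq_abs]
          calc |c i ℓ| * ‖v ℓ - a ℓ‖ ≤ 1 * (δ/((k:ℝ)+1)) :=
                mul_le_mul (hc1 ℓ) (hva ℓ) (norm_nonneg _) one_pos.le
            _ = δ/((k:ℝ)+1) := one_mul _)
      _ = (k:ℝ) * (δ/((k:ℝ)+1)) := by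
          rw [Finset.sum_const, Finset.card_univ, Fintype.card_fin, nsmul_eq_mul]
      _ < δ := by
          rw [mul_div_assoc', div_lt_iff₀ hk1]
          nlinarith
  refine ⟨u, t, ht0, ht1, hu1, husd, ?_⟩
  intro i j hij
  rw [huu, if_neg hij, mul_zero, add_zero]


lemma exists_pos_min (F : Finset ℝ) (h : ∀ x ∈ F, 0 < x) :
    ∃ δ : ℝ, 0 < δ ∧ δ ≤ 1 ∧ ∀ x ∈ F, δ ≤ x := by
  classical
  induction F using Finset.induction with
  | empty => exact ⟨1, one_pos, le_refl 1, by simp⟩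
  | @insert a F hni ih =>
    obtain ⟨δ, hδ, hδ1, hle⟩ := ih (fun x hx => h x (Finset.mem_insert_of_mem hx))
    have ha : 0 < a := h a (Finset.mem_insert_self a F)
    refine ⟨min δ a, lt_min hδ ha, (min_le_left _ _).trans hδ1, ?_⟩
    intro x hx
    rcases Finset.mem_insert.1 hx with rfl | hx
    · exact min_le_right _ _
    · exact (min_le_left _ _).trans (hle x hx)

structure GInv {n : ℕ} (S : Set (E n)) (α : ℝ) (m : ℕ) (R Y : Set (E n)) : Prop where
  unit : IsUnitSet Y
  fin : Y.Finite
  card : Y.ncard = m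
  subS : S ⊆ Y
  subR : R ⊆ Y
  disjR : ∀ x ∈ R, x ∉ S
  prim : ∀ p ∈ Y, p ∉ S → p ∉ R → ∀ y ∈ Y, y ≠ p → |⟪p, y⟫| < α
  isol : ∀ x ∈ R, ∀ ε > 0, ∃ x' : E n, ‖x'‖ = 1 ∧ ‖x - x'‖ < ε ∧
      ∀ y ∈ Y, y ≠ x → |⟪x', y⟫| < α

lemma stepA {n : ℕ} {S : Set (E n)} {α : ℝ} {m : ℕ} {R : Set (E n)} (hR : R.Finite) :
    ∀ Y : Set (E n), GInv S α m R Y → ∃ Y', GInv S α m ∅ Y' := by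
  classical
  refine Set.Finite.induction_on (motive := fun R _ =>
    ∀ Y : Set (E n), GInv S α m R Y → ∃ Y', GInv S α m ∅ Y') R hR (fun Y h => ⟨Y, h⟩) ?_
  intro x R hxR hRfin ih Y hY
  have hxY : x ∈ Y := hY.subR (Set.mem_insert x R)
  have hxS : x ∉ S := hY.disjR x (Set.mem_insert x R)
  obtain ⟨ε, hε0, hε1, hεle⟩ := exists_pos_min
    ((hY.fin.toFinset.erase x).image fun y => ‖x - y‖)
    (by
      intro r hr
      simp only [Finset.mem_image, Finset.mem_erase, Set.Finite.mem_toFinset] at hr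
      obtain ⟨y, ⟨hyne, _⟩, rfl⟩ := hr
      exact norm_pos_iff.mpr (sub_ne_zero.mpr (Ne.symm hyne)))
  obtain ⟨x', hx'1, hx'd, hx'lt⟩ := hY.isol x (Set.mem_insert x R) ε hε0
  have hx'notin : x' ∉ Y \ {x} := by
    rintro ⟨hx'Y, hx'ne⟩
    have hx'nex : x' ≠ x := by simpa using hx'ne
    have h2 : ε ≤ ‖x - x'‖ := hεle _ (Finset.mem_image.mpr
      ⟨x', Finset.mem_erase.mpr ⟨hx'nex, hY.fin.mem_toFinset.mpr hx'Y⟩, rfl⟩)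
    linarith
  have hm1 : 0 < m := by
    rw [← hY.card]
    exact (Set.ncard_pos hY.fin).mpr ⟨x, hxY⟩
  refine ih (insert x' (Y \ {x})) ⟨?_, ?_, ?_, ?_, ?_, ?_, ?_, ?_⟩
  · -- unit
    intro z hz
    rcases hz with rfl | hz
    · exact hx'1
    · exact hY.unit z hz.1
  · exact ((hY.fin.diff (t := {x})).insert x')
  · rw [Set.ncard_insert_of_notMem hx'notin (hY.fin.diff (t := {x})),
      Set.ncard_diff_singleton_of_mem hxY, hY.card]
    omega
  · intro z hz
    refine Set.mem_insert_of_mem _ ⟨hY.subS hz, ?_⟩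
    simp only [Set.mem_singleton_iff]
    rintro rfl
    exact hxS hz
  · intro z hz
    refine Set.mem_insert_of_mem _ ⟨hY.subR (Set.mem_insert_of_mem x hz), ?_⟩
    simp only [Set.mem_singleton_iff]
    rintro rfl
    exact hxR hz
  · exact fun z hz => hY.disjR z (Set.mem_insert_of_mem x hz)
  · -- prim
    intro p hpY' hpS hpR y hyY' hyne
    rcases hpY' with rfl | hp
    · rcases hyY' with rfl | hy
      · exact absurd rfl hyne
      · exact hx'lt y hy.1 (by simpa using hy.2)
    · have hpx : p ≠ x := by simpa using hp.2
      have hpR2 : p ∉ insert x R := by simp [hpx, hpR]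
      rcases hyY' with rfl | hy
      · have h3 := hx'lt p hp.1 hpx
        rwa [real_inner_comm] at h3
      · exact hY.prim p hp.1 hpS hpR2 y hy.1 hyne
  · -- isol
    intro z hzR ε₂ hε₂
    have hzY : z ∈ Y := hY.subR (Set.mem_insert_of_mem x hzR)
    have hzx : z ≠ x := fun h => hxR (h ▸ hzR)
    have hzx' : |⟪x', z⟫| < α := hx'lt z hzY hzx
    have hμ₂ : 0 < α - |⟪x', z⟫| := by linarith
    obtain ⟨z', hz'1, hz'd, hz'lt⟩ := hY.isol z (Set.mem_insert_of_mem x hzR)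
      (min ε₂ (α - |⟪x', z⟫|)) (lt_min hε₂ hμ₂)
    refine ⟨z', hz'1, lt_of_lt_of_le hz'd (min_le_left _ _), ?_⟩
    intro y hyY' hyne
    rcases hyY' with h | hy
    · rw [h]
      have h1 : ⟪z', x'⟫ = ⟪z, x'⟫ + ⟪z' - z, x'⟫ := by
        rw [inner_sub_left]; ring
      have h2 : |⟪z' - z, x'⟫| ≤ ‖z' - z‖ * ‖x'‖ := abs_real_inner_le_norm _ _
      rw [hx'1, mul_one] at h2
      have h4 : ‖z - z'‖ < α - |⟪x', z⟫| := lt_of_lt_of_le hz'd (min_le_right _ _)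
      have h5 : |⟪z, x'⟫| = |⟪x', z⟫| := by rw [real_inner_comm]
      calc |⟪z', x'⟫| ≤ |⟪z, x'⟫| + |⟪z' - z, x'⟫| := by rw [h1]; exact abs_add_le _ _
        _ < α := by
          rw [h5]
          have := norm_sub_rev z z'
          linarith
    · exact hz'lt y hy.1 hyne


theorem nonisolable_ge_n_add_one {n m : ℕ} (X : Set (E n))
    (hX : Grassmannian m X) (α : ℝ) (hα : coh X = α) (hpos : 0 < α) :
    n + 1 ≤ {x ∈ X | ¬ Isolable X x}.ncard := by
  classical
  by_contra hcon
  push_neg at hcon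
  set S := {x ∈ X | ¬ Isolable X x} with hSdef
  have hk : S.ncard ≤ n := by omega
  obtain ⟨hXunit, hXfin, hXcard, hXmin⟩ := hX
  have hSsub : S ⊆ X := Set.sep_subset _ _
  have hSfin : S.Finite := hXfin.subset hSsub
  have hbase : GInv S α m (X \ S) X := by
    refine ⟨hXunit, hXfin, hXcard, hSsub, Set.diff_subset, fun x hx => hx.2, ?_, ?_⟩
    · intro p hpX hpS hpR
      exact absurd ⟨hpX, hpS⟩ hpR
    · intro x hx ε hε
      have hxI : Isolable X x := by
        by_contra hni
        exact hx.2 ⟨hx.1, hni⟩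
      obtain ⟨x', h1, h2, h3⟩ := hxI ε hε
      exact ⟨x', h1, h2, fun y hy hne => hα ▸ h3 y hy hne⟩
  obtain ⟨Y₀, hY₀⟩ := stepA (hXfin.diff (t := S)) X hbase
  haveI : Fintype S := hSfin.fintype
  have hcardS : Fintype.card S = S.ncard := by
    rw [Set.ncard_eq_toFinset_card', Set.toFinset_card]
  set e := Fintype.equivFinOfCardEq hcardS with hedef
  set s : Fin (S.ncard) → E n := fun i => ((e.symm i : S) : E n) with hsdef
  have hsS : ∀ i, s i ∈ S := fun i => (e.symm i).2
  have hsinj : Function.Injective s := by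
    intro i j hij
    exact e.symm.injective (Subtype.coe_injective hij)
  have hsunit : ∀ i, ‖s i‖ = 1 := fun i => hY₀.unit _ (hY₀.subS (hsS i))
  set P := Y₀ \ S with hPdef
  have hPfin : P.Finite := hY₀.fin.diff (t := S)
  have hprim : ∀ p ∈ P, ∀ y ∈ Y₀, y ≠ p → |⟪p, y⟫| < α :=
    fun p hp => hY₀.prim p hp.1 hp.2 (Set.notMem_empty p)
  have hsnp : ∀ i, ∀ p ∈ P, s i ≠ p := by
    intro i p hp h
    exact hp.2 (h ▸ hsS i)
  have hsPlt : ∀ i, ∀ p ∈ P, |⟪s i, p⟫| < α := by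
    intro i p hp
    have h1 := hprim p hp (s i) (hY₀.subS (hsS i)) (hsnp i p hp)
    rwa [real_inner_comm] at h1
  set D : Finset ℝ :=
    (((Finset.univ : Finset (Fin (S.ncard))) ×ˢ hPfin.toFinset).image
        (fun ip => α - |⟪s ip.1, ip.2⟫|) ∪
      (((Finset.univ ×ˢ Finset.univ : Finset (Fin (S.ncard) × Fin (S.ncard))).filter
        (fun ij => ij.1 ≠ ij.2)).image (fun ij => ‖s ij.1 - s ij.2‖ / 2))) ∪
      ((Finset.univ ×ˢ hPfin.toFinset).image (fun ip => ‖s ip.1 - ip.2‖ / 2)) with hDdef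
  have hDpos : ∀ r ∈ D, 0 < r := by
    intro r hr
    rw [hDdef] at hr
    rcases Finset.mem_union.1 hr with hr | hr
    · rcases Finset.mem_union.1 hr with hr | hr
      · obtain ⟨⟨i, p⟩, hip, rfl⟩ := Finset.mem_image.1 hr
        have hp : p ∈ P := hPfin.mem_toFinset.1 (Finset.mem_product.1 hip).2
        have := hsPlt i p hp
        simp only []
        linarith
      · obtain ⟨⟨i, j⟩, hij, rfl⟩ := Finset.mem_image.1 hr
        have hne : i ≠ j := (Finset.mem_filter.1 hij).2
        have : s i ≠ s j := fun h => hne (hsinj h)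
        have : 0 < ‖s i - s j‖ := norm_pos_iff.mpr (sub_ne_zero.mpr this)
        simp only []
        linarith
    · obtain ⟨⟨i, p⟩, hip, rfl⟩ := Finset.mem_image.1 hr
      have hp : p ∈ P := hPfin.mem_toFinset.1 (Finset.mem_product.1 hip).2
      have : 0 < ‖s i - p‖ := norm_pos_iff.mpr (sub_ne_zero.mpr (hsnp i p hp))
      simp only []
      linarith
  obtain ⟨δ, hδ0, hδ1, hδle⟩ := exists_pos_min D hDpos
  have hmargin1 : ∀ i, ∀ p ∈ P, δ ≤ α - |⟪s i, p⟫| := by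
    intro i p hp
    refine hδle _ ?_
    rw [hDdef]
    refine Finset.mem_union_left _ (Finset.mem_union_left _ (Finset.mem_image.2 ?_))
    exact ⟨(i, p), Finset.mem_product.2 ⟨Finset.mem_univ i, hPfin.mem_toFinset.2 hp⟩, rfl⟩
  have hmargin2 : ∀ i j : Fin (S.ncard), i ≠ j → δ ≤ ‖s i - s j‖ / 2 := by
    intro i j hne
    refine hδle _ ?_
    rw [hDdef]
    refine Finset.mem_union_left _ (Finset.mem_union_right _ (Finset.mem_image.2 ?_))
    exact ⟨(i, j), Finset.mem_filter.2 ⟨Finset.mem_product.2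
      ⟨Finset.mem_univ i, Finset.mem_univ j⟩, hne⟩, rfl⟩
  have hmargin3 : ∀ i, ∀ p ∈ P, δ ≤ ‖s i - p‖ / 2 := by
    intro i p hp
    refine hδle _ ?_
    rw [hDdef]
    refine Finset.mem_union_right _ (Finset.mem_image.2 ?_)
    exact ⟨(i, p), Finset.mem_product.2 ⟨Finset.mem_univ i, hPfin.mem_toFinset.2 hp⟩, rfl⟩
  obtain ⟨u, t, ht0, ht1, hu1, hud, huij⟩ := lemB hk s hsunit hδ0
  have hune : ∀ i, ∀ p ∈ P, u i ≠ p := by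
    intro i p hp heq
    have h1 : ‖s i - p‖ ≤ ‖s i - u i‖ + ‖u i - p‖ := by
      calc ‖s i - p‖ = ‖(s i - u i) + (u i - p)‖ := by rw [sub_add_sub_cancel]
        _ ≤ _ := norm_add_le _ _
    have h5 : ‖u i - p‖ = 0 := by rw [heq, sub_self, norm_zero]
    have h6 : ‖s i - u i‖ = ‖u i - s i‖ := norm_sub_rev _ _
    have h4 : 0 < ‖s i - p‖ := norm_pos_iff.mpr (sub_ne_zero.mpr (hsnp i p hp))
    linarith [hud i, hmargin3 i p hp]
  have huinj : Function.Injective u := by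
    intro i j hij
    by_contra hne
    have h1 : ‖s i - s j‖ ≤ ‖s i - u i‖ + ‖u i - s j‖ := by
      calc ‖s i - s j‖ = ‖(s i - u i) + (u i - s j)‖ := by rw [sub_add_sub_cancel]
        _ ≤ _ := norm_add_le _ _
    have h2 : ‖u i - s j‖ ≤ ‖u i - u j‖ + ‖u j - s j‖ := by
      calc ‖u i - s j‖ = ‖(u i - u j) + (u j - s j)‖ := by rw [sub_add_sub_cancel]
        _ ≤ _ := norm_add_le _ _
    have h7 : ‖u i - u j‖ = 0 := by rw [hij, sub_self, norm_zero]
    have h6 : 0 < ‖s i - s j‖ :=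
      norm_pos_iff.mpr (sub_ne_zero.mpr (fun h => hne (hsinj h)))
    linarith [h1, h2, hud i, hud j, hmargin2 i j hne, h7,
      norm_sub_rev (s i) (u i), norm_sub_rev (s j) (u j)]
  set Z := Set.range u ∪ P with hZdef
  have hdisj : Disjoint (Set.range u) P := by
    rw [Set.disjoint_left]
    rintro z ⟨i, rfl⟩ hzP
    exact hune i _ hzP rfl
  have hZfin : Z.Finite := (Set.finite_range u).union hPfin
  have hZunit : IsUnitSet Z := by
    intro z hz
    rcases hz with ⟨i, rfl⟩ | hz
    · exact hu1 i
    · exact hY₀.unit z hz.1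
  have hZcard : Z.ncard = m := by
    rw [hZdef, Set.ncard_union_eq hdisj (Set.finite_range u) hPfin]
    have h1 : (Set.range u).ncard = S.ncard := by
      rw [← Set.image_univ, Set.ncard_image_of_injective _ huinj, Set.ncard_univ,
        Nat.card_eq_fintype_card, Fintype.card_fin]
    have h2 : P.ncard = m - S.ncard := by
      rw [hPdef, Set.ncard_diff hY₀.subS hSfin, hY₀.card]
    have hkm : S.ncard ≤ m := by
      rw [← hY₀.card]
      exact Set.ncard_le_ncard hY₀.subS hY₀.fin
    omega
  have cross : ∀ i, ∀ p ∈ P, |⟪u i, p⟫| < α := by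
    intro i p hp
    have h1 : ⟪u i, p⟫ = ⟪s i, p⟫ + ⟪u i - s i, p⟫ := by
      rw [inner_sub_left]; ring
    have h2 : |⟪u i - s i, p⟫| ≤ ‖u i - s i‖ * ‖p‖ := abs_real_inner_le_norm _ _
    rw [hY₀.unit p hp.1, mul_one] at h2
    have h3 := hmargin1 i p hp
    have h4 := hud i
    calc |⟪u i, p⟫| ≤ |⟪s i, p⟫| + |⟪u i - s i, p⟫| := by
          rw [h1]; exact abs_add_le _ _
      _ < α := by linarith
  have hpairs : ∀ z1 ∈ Z, ∀ z2 ∈ Z, z1 ≠ z2 → |⟪z1, z2⟫| < α := by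
    intro z1 hz1 z2 hz2 hne
    rcases hz1 with ⟨i, rfl⟩ | hz1p
    · rcases hz2 with ⟨j, rfl⟩ | hz2p
      · have hij : i ≠ j := fun h => hne (h ▸ rfl)
        rw [huij i j hij, abs_mul, abs_of_nonneg (by linarith : (0:ℝ) ≤ 1 - t)]
        have hsij : |⟪s i, s j⟫| ≤ α := by
          rw [← hα]
          exact abs_inner_le_coh hXfin (hSsub (hsS i)) (hSsub (hsS j))
            (fun h => hij (hsinj h))
        nlinarith
      · exact cross i z2 hz2p
    · rcases hz2 with ⟨j, rfl⟩ | hz2p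
      · rw [show ⟪z1, u j⟫ = ⟪u j, z1⟫ from real_inner_comm _ _]
        exact cross j z1 hz1p
      · exact hprim z1 hz1p z2 hz2p.1 (Ne.symm hne)
  have hcohZ : coh Z < α := coh_lt hZfin hpos hpairs
  have hmin := hXmin Z hZunit hZfin hZcard
  rw [hα] at hmin
  linarith
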